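/- Let α < 0 and a ∈ ℝ with αa² = −8. Then the triple (a, a, a) has all sectional curvatures equal, K₁₂ = K₁₃ = K₂₃ = −2/α, all principal Ricci curvatures equal, r₁ = r₂ = r₃ = −4/α, and moreover the corresponding round metric is a genuine fixed point of the RG-2 flow in the sense that −2r_i − (α/2)·S_i = 0 for each i, where S₁ = 2(K₁₂² + K₁₃²), S₂ = 2(K₁₂² + K₂₃²), S₃ = 2(K₁₃² + K₂₃²) are the eigenvalues of the Rm² tensor. -/
import Mathlib


noncomputable section

/-- Principal Ricci curvature `r₁ = ½(a₁² − (a₂−a₃)²)`. -/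
def r1 (a1 a2 a3 : ℝ) : ℝ := (a1 ^ 2 - (a2 - a3) ^ 2) / 2

/-- Principal Ricci curvature `r₂ = ½(a₂² − (a₁−a₃)²)`. -/
def r2 (a1 a2 a3 : ℝ) : ℝ := (a2 ^ 2 - (a1 - a3) ^ 2) / 2

/-- Principal Ricci curvature `r₃ = ½(a₃² − (a₁−a₂)²)`. -/
def r3 (a1 a2 a3 : ℝ) : ℝ := (a3 ^ 2 - (a1 - a2) ^ 2) / 2

/-- Sectional curvature `K₁₂ = (r₁+r₂−r₃)/2`. -/
def K12 (a1 a2 a3 : ℝ) : ℝ := (r1 a1 a2 a3 + r2 a1 a2 a3 - r3 a1 a2 a3) / 2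

/-- Sectional curvature `K₁₃ = (r₁+r₃−r₂)/2`. -/
def K13 (a1 a2 a3 : ℝ) : ℝ := (r1 a1 a2 a3 + r3 a1 a2 a3 - r2 a1 a2 a3) / 2

/-- Sectional curvature `K₂₃ = (r₂+r₃−r₁)/2`. -/
def K23 (a1 a2 a3 : ℝ) : ℝ := (r2 a1 a2 a3 + r3 a1 a2 a3 - r1 a1 a2 a3) / 2

/-- for `α < 0` and `αa² = −8`, the round triple `(a,a,a)` has all sectional
curvatures `−2/α`, all Ricci curvatures `−4/α`, and is a genuine fixed point of RG-2 flow: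
`−2rᵢ − (α/2)·Sᵢ = 0` where `S₁ = 2(K₁₂²+K₁₃²)`, `S₂ = 2(K₁₂²+K₂₃²)`, `S₃ = 2(K₁₃²+K₂₃²)`
are the eigenvalues of the `Rm²` tensor. -/
theorem stmt8 (α a : ℝ) (hα : α < 0) (ha : α * a ^ 2 = -8) :
    K12 a a a = -(2 / α) ∧ K13 a a a = -(2 / α) ∧ K23 a a a = -(2 / α) ∧
    r1 a a a = -(4 / α) ∧ r2 a a a = -(4 / α) ∧ r3 a a a = -(4 / α) ∧
    -2 * r1 a a a - (α / 2) * (2 * (K12 a a a ^ 2 + K13 a a a ^ 2)) = 0 ∧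
    -2 * r2 a a a - (α / 2) * (2 * (K12 a a a ^ 2 + K23 a a a ^ 2)) = 0 ∧
    -2 * r3 a a a - (α / 2) * (2 * (K13 a a a ^ 2 + K23 a a a ^ 2)) = 0 := by
  have hne : α ≠ 0 := ne_of_lt hα
  have ha2 : a ^ 2 = -8 / α := by field_simp; linarith [ha]
  simp only [K12, K13, K23, r1, r2, r3, ha2]
  refine ⟨by ring, by ring, by ring, by ring, by ring, by ring, ?_, ?_, ?_⟩ <;> field_simp <;> ring
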